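/- Fix R > 0 and an integer m. For (δ_R, δ_I) ∈ ℝ² define r(α) = R + δ_R cos(mα) − δ_I sin(mα) and the curve X(α) = r(α)(cos α, sin α). Then as (δ_R, δ_I) → (0,0) the radial projection of the Airy velocity satisfies, uniformly in α ∈ [0,2π]: W(α)·(cos α, sin α) = δ_I τ* cos(mα) + δ_R τ* sin(mα) + O(δ_R² + δ_I²), where τ* = (m³ − (3/2)m)/R³. Precisely, there exist C > 0 and ε > 0 such that whenever δ_R² + δ_I² < ε², for all α: |W(α)·(cos α, sin α) − τ*(δ_I cos(mα) + δ_R sin(mα))| ≤ C(δ_R² + δ_I²). -/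

import Mathlib

open scoped Real

noncomputable section

/-- The arclength element `s_α = √(r² + r_α²)` of the curve `X(α) = r(α)(cos α, sin α)`. -/
def polarSA (r : ℝ → ℝ) (α : ℝ) : ℝ := Real.sqrt (r α ^ 2 + (deriv r α) ^ 2)

/-- Curvature `k = (r² + 2r_α² − r r_αα)/(r² + r_α²)^{3/2}`. -/
def polarCurvature (r : ℝ → ℝ) (α : ℝ) : ℝ :=
  (r α ^ 2 + 2 * (deriv r α) ^ 2 - r α * deriv (deriv r) α) / polarSA r α ^ 3

/-- Arclength derivative of the curvature, `k_s = k_α / s_α`. -/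
def polarKs (r : ℝ → ℝ) (α : ℝ) : ℝ := deriv (polarCurvature r) α / polarSA r α

/-- The unit tangent `τ = X_α/s_α` of the curve `X(α) = r(α)(cos α, sin α)`. -/
def polarTangent (r : ℝ → ℝ) (α : ℝ) : ℝ × ℝ :=
  (deriv (fun a => r a * Real.cos a) α / polarSA r α,
   deriv (fun a => r a * Real.sin a) α / polarSA r α)

/-- The unit normal `n = (r_α sin α + r cos α, r sin α − r_α cos α)/s_α`. -/
def polarNormal (r : ℝ → ℝ) (α : ℝ) : ℝ × ℝ :=
  ((deriv r α * Real.sin α + r α * Real.cos α) / polarSA r α,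
   (r α * Real.sin α - deriv r α * Real.cos α) / polarSA r α)

/-- The Airy velocity `W = (−k_s) n + (k²/2) τ`. -/
def airyVelocity (r : ℝ → ℝ) (α : ℝ) : ℝ × ℝ :=
  (-(polarKs r α) * (polarNormal r α).1 + (polarCurvature r α ^ 2 / 2) * (polarTangent r α).1,
   -(polarKs r α) * (polarNormal r α).2 + (polarCurvature r α ^ 2 / 2) * (polarTangent r α).2)

/-- Radial projection `W · (cos α, sin α)` of the Airy velocity. -/
def airyRadialProj (r : ℝ → ℝ) (α : ℝ) : ℝ :=
  (airyVelocity r α).1 * Real.cos α + (airyVelocity r α).2 * Real.sin α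

end

set_option maxHeartbeats 2000000 in
theorem aux_expansion (R : ℝ) (hR : 0 < R) (mr δR δI : ℝ)
    (hsmall : δR ^ 2 + δI ^ 2 < (R / (2 * (1 + |mr|))) ^ 2) (α : ℝ) :
    |airyRadialProj (fun a => R + δR * Real.cos (mr * a) - δI * Real.sin (mr * a)) α
      - (mr ^ 3 - (3 / 2) * mr) / R ^ 3 * (δI * Real.cos (mr * α) + δR * Real.sin (mr * α))|
    ≤ (128 * (1 + |mr|) * (41 * (1 + mr ^ 2) ^ 2 + 448 * (mr ^ 2 + 3 / 2) * (3 + mr ^ 2)) / R ^ 4)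
        * (δR ^ 2 + δI ^ 2) := by
  set x := Real.sqrt (δR ^ 2 + δI ^ 2) with hxdef
  have hD0 : (0:ℝ) ≤ δR ^ 2 + δI ^ 2 := by positivity
  have hx0 : 0 ≤ x := Real.sqrt_nonneg _
  have hx2 : x ^ 2 = δR ^ 2 + δI ^ 2 := Real.sq_sqrt hD0
  have hε0 : 0 < R / (2 * (1 + |mr|)) := by positivity
  have hxε : x < R / (2 * (1 + |mr|)) := by
    rw [hxdef]
    have h := Real.sqrt_lt_sqrt hD0 hsmall
    rwa [Real.sqrt_sq hε0.le] at h
  have hm0 : (0:ℝ) ≤ |mr| := abs_nonneg mr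
  clear_value x
  have hxR2 : x < R / 2 := by
    refine lt_of_lt_of_le hxε ?_
    rw [div_le_div_iff₀ (by positivity) (by positivity)]
    nlinarith
  have hxR : x ≤ R := by linarith
  have hmx : |mr| * x ≤ R / 2 := by
    have h1 : (1 + |mr|) * x ≤ (1 + |mr|) * (R / (2 * (1 + |mr|))) :=
      mul_le_mul_of_nonneg_left hxε.le (by positivity)
    have h2 : (1 + |mr|) * (R / (2 * (1 + |mr|))) = R / 2 := by
      field_simp
    nlinarith [hx0]
  -- the functions
  set p : ℝ → ℝ := fun a => δR * Real.cos (mr * a) - δI * Real.sin (mr * a) with hpdef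
  set q : ℝ → ℝ := fun a => -(δR * Real.sin (mr * a)) - δI * Real.cos (mr * a) with hqdef
  set r : ℝ → ℝ := fun a => R + δR * Real.cos (mr * a) - δI * Real.sin (mr * a) with hrdef
  have hrp : ∀ a, r a = R + p a := fun a => by simp only [hrdef, hpdef]; ring
  have hmul : ∀ a : ℝ, HasDerivAt (fun y : ℝ => mr * y) mr a := fun a => by
    simpa using (hasDerivAt_id a).const_mul mr
  have hp : ∀ a, HasDerivAt p (mr * q a) a := fun a => by
    have hc := ((hmul a).cos).const_mul δR
    have hs := ((hmul a).sin).const_mul δI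
    have := hc.sub hs
    refine this.congr_deriv ?_
    simp only [hqdef]; ring
  have hq : ∀ a, HasDerivAt q (-(mr * p a)) a := fun a => by
    have hs := (((hmul a).sin).const_mul δR).neg
    have hc := ((hmul a).cos).const_mul δI
    have := hs.sub hc
    refine this.congr_deriv ?_
    simp only [hpdef]; ring
  have hr : ∀ a, HasDerivAt r (mr * q a) a := fun a => by
    have hc := ((hmul a).cos).const_mul δR
    have hs := ((hmul a).sin).const_mul δI
    have := ((hasDerivAt_const a R).add hc).sub hs
    refine this.congr_deriv ?_
    simp only [hqdef]; ring
  have hdr : deriv r = fun a => mr * q a := funext fun a => (hr a).deriv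
  have hddr : deriv (deriv r) = fun a => mr * -(mr * p a) := by
    rw [hdr]; exact funext fun a => ((hq a).const_mul mr).deriv
  set Qf : ℝ → ℝ := fun a => r a ^ 2 + (mr * q a) ^ 2 with hQdef
  set Nf : ℝ → ℝ := fun a => r a ^ 2 + 2 * (mr * q a) ^ 2 + mr ^ 2 * (r a * p a) with hNdef
  have hQd : ∀ a, HasDerivAt Qf (2 * (mr * q a) * (r a - mr ^ 2 * p a)) a := fun a => by
    have h1 := (hr a).pow 2
    have h2 := (((hq a).const_mul mr)).pow 2
    have := h1.add h2
    refine this.congr_deriv ?_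
    push_cast; ring
  have hNd : ∀ a, HasDerivAt Nf (mr * q a * (2 * r a + mr ^ 2 * r a - 3 * mr ^ 2 * p a)) a := fun a => by
    have h1 := (hr a).pow 2
    have h2 := ((((hq a).const_mul mr)).pow 2).const_mul 2
    have h3 := ((hr a).mul (hp a)).const_mul (mr ^ 2)
    have := (h1.add h2).add h3
    refine this.congr_deriv ?_
    push_cast; ring
  clear_value p q r Qf Nf
  -- pointwise bounds
  have hpq : ∀ a, p a ^ 2 + q a ^ 2 = δR ^ 2 + δI ^ 2 := fun a => by
    simp only [hpdef, hqdef]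
    linear_combination (δR ^ 2 + δI ^ 2) * (Real.sin_sq_add_cos_sq (mr * a))
  have hpb : ∀ a, |p a| ≤ x := fun a => by
    rw [← Real.sqrt_sq_eq_abs, hxdef]
    exact Real.sqrt_le_sqrt (by nlinarith [sq_nonneg (q a), hpq a])
  have hqb : ∀ a, |q a| ≤ x := fun a => by
    rw [← Real.sqrt_sq_eq_abs, hxdef]
    exact Real.sqrt_le_sqrt (by nlinarith [sq_nonneg (p a), hpq a])
  have hrlb : ∀ a, R / 2 ≤ r a := fun a => by
    obtain ⟨h1, h2⟩ := abs_le.mp (hpb a)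
    rw [hrp a]; linarith [hxR2, hx0]
  have hrub : ∀ a, r a ≤ 3 * R / 2 := fun a => by
    obtain ⟨h1, h2⟩ := abs_le.mp (hpb a)
    rw [hrp a]; linarith [hxR2, hx0]
  have hQ0 : ∀ a, 0 < Qf a := fun a => by
    have h1 : 0 < r a := lt_of_lt_of_le (by linarith) (hrlb a)
    simp only [hQdef]
    nlinarith [pow_pos h1 2, sq_nonneg (mr * q a)]
  -- the square root and curvature
  set u := Real.sqrt (Qf α) with hudef
  have hu0 : 0 < u := Real.sqrt_pos.mpr (hQ0 α)
  have hu2 : u ^ 2 = Qf α := Real.sq_sqrt (hQ0 α).le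
  have hkfun : polarCurvature r = fun a => Nf a / Real.sqrt (Qf a) ^ 3 := by
    funext a
    unfold polarCurvature polarSA
    simp only [hddr]
    simp only [hdr]
    simp only [hQdef, hNdef]
    congr 1
    ring
  have hsqα : HasDerivAt (fun a => Real.sqrt (Qf a))
      ((2 * (mr * q α) * (r α - mr ^ 2 * p α)) / (2 * Real.sqrt (Qf α))) α :=
    (hQd α).sqrt (hQ0 α).ne'
  have hden : HasDerivAt (fun a => Real.sqrt (Qf a) ^ 3)
      (3 * Real.sqrt (Qf α) ^ 2 * ((2 * (mr * q α) * (r α - mr ^ 2 * p α)) / (2 * Real.sqrt (Qf α)))) α := by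
    have h3 := hsqα.pow 3
    exact h3.congr_deriv (by push_cast; ring)
  have hkd : HasDerivAt (polarCurvature r)
      ((mr * q α * (2 * r α + mr ^ 2 * r α - 3 * mr ^ 2 * p α) * Real.sqrt (Qf α) ^ 3
          - Nf α * (3 * Real.sqrt (Qf α) ^ 2 * ((2 * (mr * q α) * (r α - mr ^ 2 * p α)) / (2 * Real.sqrt (Qf α)))))
        / (Real.sqrt (Qf α) ^ 3) ^ 2) α := by
    rw [hkfun]
    exact (hNd α).div hden (by positivity)
  have hsA : polarSA r α = u := by
    unfold polarSA
    rw [(hr α).deriv]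
    simp only [hudef, hQdef]
  have hkval : polarCurvature r α = Nf α / u ^ 3 := by
    simp only [hkfun]
    rw [hudef]
  have hks : polarKs r α = deriv (polarCurvature r) α / u := by
    unfold polarKs
    rw [hsA]
  have hT1 : deriv (fun a => r a * Real.cos a) α = mr * q α * Real.cos α - r α * Real.sin α := by
    rw [show (fun a => r a * Real.cos a) = r * Real.cos from rfl, ((hr α).mul (Real.hasDerivAt_cos α)).deriv]; ring
  have hT2 : deriv (fun a => r a * Real.sin a) α = mr * q α * Real.sin α + r α * Real.cos α := by
    rw [show (fun a => r a * Real.sin a) = r * Real.sin from rfl, ((hr α).mul (Real.hasDerivAt_sin α)).deriv]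
  have hcs := Real.sin_sq_add_cos_sq α
  have hn' : (mr * q α * Real.sin α + r α * Real.cos α) / u * Real.cos α
      + (r α * Real.sin α - mr * q α * Real.cos α) / u * Real.sin α = r α / u := by
    rw [div_mul_eq_mul_div, div_mul_eq_mul_div, ← add_div]
    rw [show (mr * q α * Real.sin α + r α * Real.cos α) * Real.cos α
        + (r α * Real.sin α - mr * q α * Real.cos α) * Real.sin α = r α from by
      linear_combination (r α) * hcs]
  have ht' : (mr * q α * Real.cos α - r α * Real.sin α) / u * Real.cos α
      + (mr * q α * Real.sin α + r α * Real.cos α) / u * Real.sin α = mr * q α / u := by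
    rw [div_mul_eq_mul_div, div_mul_eq_mul_div, ← add_div]
    rw [show (mr * q α * Real.cos α - r α * Real.sin α) * Real.cos α
        + (mr * q α * Real.sin α + r α * Real.cos α) * Real.sin α = mr * q α from by
      linear_combination (mr * q α) * hcs]
  have hWdot : airyRadialProj r α
      = -(polarKs r α) * (r α / u) + (polarCurvature r α ^ 2 / 2) * (mr * q α / u) := by
    unfold airyRadialProj airyVelocity polarNormal polarTangent
    rw [hT1, hT2, hsA, (hr α).deriv]
    linear_combination (-(polarKs r α)) * hn' + (polarCurvature r α ^ 2 / 2) * ht'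
  clear_value u
  have hproj : airyRadialProj r α = mr * q α *
      (-(2 + mr ^ 2) * r α ^ 2 * Qf α + 3 * mr ^ 2 * p α * (r α * Qf α) + 3 * r α ^ 2 * Nf α
        - 3 * mr ^ 2 * p α * (r α * Nf α) + Nf α ^ 2 / 2) / u ^ 7 := by
    rw [hWdot, hks, hkd.deriv, hkval]
    rw [← hudef]
    rw [← hu2]
    field_simp
    ring
  -- polynomial remainder bound
  set Bt := -(2 + mr ^ 2) * r α ^ 2 * Qf α + 3 * mr ^ 2 * p α * (r α * Qf α) + 3 * r α ^ 2 * Nf α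
        - 3 * mr ^ 2 * p α * (r α * Nf α) + Nf α ^ 2 / 2 with hBtdef
  clear_value Bt
  have hQval : Qf α = (R + p α) ^ 2 + mr ^ 2 * (q α) ^ 2 := by
    simp only [hQdef]; rw [hrp α]; ring
  have hNval : Nf α = (R + p α) ^ 2 + 2 * mr ^ 2 * (q α) ^ 2 + mr ^ 2 * ((R + p α) * p α) := by
    simp only [hNdef]; rw [hrp α]; ring
  have hdiff : Bt - (3 / 2 - mr ^ 2) * R ^ 4
      = ((3 / 2 : ℝ) * (p α) ^ 4 + 6 * R * (p α) ^ 3 + 9 * R ^ 2 * (p α) ^ 2 + 6 * R ^ 3 * (p α))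
        + mr ^ 2 * (6 * (p α) ^ 2 * (q α) ^ 2 + 3 * (p α) ^ 4 + 12 * R * ((p α) * (q α) ^ 2)
            + 8 * R * (p α) ^ 3 + 6 * R ^ 2 * (q α) ^ 2 + 6 * R ^ 2 * (p α) ^ 2)
        + mr ^ 4 * (2 * (q α) ^ 4 - 2 * (p α) ^ 2 * (q α) ^ 2 - (5 / 2) * (p α) ^ 4
            - 3 * R * ((p α) * (q α) ^ 2) - 5 * R * (p α) ^ 3 - R ^ 2 * (q α) ^ 2
            - (5 / 2) * R ^ 2 * (p α) ^ 2) := by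
    rw [hBtdef, hQval, hNval, hrp α]; ring
  have hsqP : (p α) ^ 2 ≤ x ^ 2 := by
    rw [← sq_abs]; exact pow_le_pow_left₀ (abs_nonneg _) (hpb α) 2
  have hsqQ : (q α) ^ 2 ≤ x ^ 2 := by
    rw [← sq_abs]; exact pow_le_pow_left₀ (abs_nonneg _) (hqb α) 2
  have hx2R : x ^ 2 ≤ R * x := by
    calc x ^ 2 = x * x := sq x
      _ ≤ R * x := mul_le_mul_of_nonneg_right hxR hx0
  have hx3R : x ^ 3 ≤ R ^ 2 * x := by
    calc x ^ 3 = (x ^ 2) * x := by ring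
      _ ≤ (R * x) * x := mul_le_mul_of_nonneg_right hx2R hx0
      _ = R * x ^ 2 := by ring
      _ ≤ R * (R * x) := mul_le_mul_of_nonneg_left hx2R hR.le
      _ = R ^ 2 * x := by ring
  have hx4R : x ^ 4 ≤ R ^ 3 * x := by
    calc x ^ 4 = (x ^ 3) * x := by ring
      _ ≤ (R ^ 2 * x) * x := mul_le_mul_of_nonneg_right hx3R hx0
      _ = R ^ 2 * x ^ 2 := by ring
      _ ≤ R ^ 2 * (R * x) := mul_le_mul_of_nonneg_left hx2R (by positivity)
      _ = R ^ 3 * x := by ring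
  have hAbsP : |p α| ≤ x := hpb α
  have hAbsP2 : |(p α) ^ 2| ≤ R * x := by
    rw [abs_of_nonneg (sq_nonneg _)]; exact hsqP.trans hx2R
  have hAbsQ2 : |(q α) ^ 2| ≤ R * x := by
    rw [abs_of_nonneg (sq_nonneg _)]; exact hsqQ.trans hx2R
  have hAbsP3 : |(p α) ^ 3| ≤ R ^ 2 * x := by
    rw [abs_pow]; exact (pow_le_pow_left₀ (abs_nonneg _) (hpb α) 3).trans hx3R
  have hAbsPQ2 : |(p α) * (q α) ^ 2| ≤ R ^ 2 * x := by
    rw [abs_mul, abs_pow]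
    calc |p α| * |q α| ^ 2 ≤ x * x ^ 2 :=
          mul_le_mul (hpb α) (pow_le_pow_left₀ (abs_nonneg _) (hqb α) 2) (by positivity) hx0
      _ = x ^ 3 := by ring
      _ ≤ R ^ 2 * x := hx3R
  have hAbsP4 : |(p α) ^ 4| ≤ R ^ 3 * x := by
    rw [abs_pow]; exact (pow_le_pow_left₀ (abs_nonneg _) (hpb α) 4).trans hx4R
  have hAbsQ4 : |(q α) ^ 4| ≤ R ^ 3 * x := by
    rw [abs_pow]; exact (pow_le_pow_left₀ (abs_nonneg _) (hqb α) 4).trans hx4R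
  have hAbsP2Q2 : |(p α) ^ 2 * (q α) ^ 2| ≤ R ^ 3 * x := by
    rw [abs_mul, abs_pow, abs_pow]
    calc |p α| ^ 2 * |q α| ^ 2 ≤ x ^ 2 * x ^ 2 :=
          mul_le_mul (pow_le_pow_left₀ (abs_nonneg _) (hpb α) 2)
            (pow_le_pow_left₀ (abs_nonneg _) (hqb α) 2) (by positivity) (by positivity)
      _ = x ^ 4 := by ring
      _ ≤ R ^ 3 * x := hx4R
  have hRx0 : (0:ℝ) ≤ R ^ 3 * x := by positivity
  have hG0 : |(3 / 2 : ℝ) * (p α) ^ 4 + 6 * R * (p α) ^ 3 + 9 * R ^ 2 * (p α) ^ 2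
      + 6 * R ^ 3 * (p α)| ≤ (45 / 2) * (R ^ 3 * x) := by
    rw [abs_le]
    constructor <;>
      linarith only [(abs_le.mp hAbsP4).1, (abs_le.mp hAbsP4).2,
        mul_le_mul_of_nonneg_left (abs_le.mp hAbsP3).1 (show (0:ℝ) ≤ R by positivity),
        mul_le_mul_of_nonneg_left (abs_le.mp hAbsP3).2 (show (0:ℝ) ≤ R by positivity),
        mul_le_mul_of_nonneg_left (abs_le.mp hAbsP2).1 (show (0:ℝ) ≤ R ^ 2 by positivity),
        mul_le_mul_of_nonneg_left (abs_le.mp hAbsP2).2 (show (0:ℝ) ≤ R ^ 2 by positivity),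
        mul_le_mul_of_nonneg_left (abs_le.mp hAbsP).1 (show (0:ℝ) ≤ R ^ 3 by positivity),
        mul_le_mul_of_nonneg_left (abs_le.mp hAbsP).2 (show (0:ℝ) ≤ R ^ 3 by positivity)]
  have hG1 : |6 * (p α) ^ 2 * (q α) ^ 2 + 3 * (p α) ^ 4 + 12 * R * ((p α) * (q α) ^ 2)
      + 8 * R * (p α) ^ 3 + 6 * R ^ 2 * (q α) ^ 2 + 6 * R ^ 2 * (p α) ^ 2|
      ≤ 41 * (R ^ 3 * x) := by
    rw [abs_le]
    constructor <;>
      linarith only [(abs_le.mp hAbsP4).1, (abs_le.mp hAbsP4).2,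
        (abs_le.mp hAbsP2Q2).1, (abs_le.mp hAbsP2Q2).2,
        mul_le_mul_of_nonneg_left (abs_le.mp hAbsPQ2).1 (show (0:ℝ) ≤ R by positivity),
        mul_le_mul_of_nonneg_left (abs_le.mp hAbsPQ2).2 (show (0:ℝ) ≤ R by positivity),
        mul_le_mul_of_nonneg_left (abs_le.mp hAbsP3).1 (show (0:ℝ) ≤ R by positivity),
        mul_le_mul_of_nonneg_left (abs_le.mp hAbsP3).2 (show (0:ℝ) ≤ R by positivity),
        mul_le_mul_of_nonneg_left (abs_le.mp hAbsQ2).1 (show (0:ℝ) ≤ R ^ 2 by positivity),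
        mul_le_mul_of_nonneg_left (abs_le.mp hAbsQ2).2 (show (0:ℝ) ≤ R ^ 2 by positivity),
        mul_le_mul_of_nonneg_left (abs_le.mp hAbsP2).1 (show (0:ℝ) ≤ R ^ 2 by positivity),
        mul_le_mul_of_nonneg_left (abs_le.mp hAbsP2).2 (show (0:ℝ) ≤ R ^ 2 by positivity)]
  have hG2 : |2 * (q α) ^ 4 - 2 * (p α) ^ 2 * (q α) ^ 2 - (5 / 2) * (p α) ^ 4
      - 3 * R * ((p α) * (q α) ^ 2) - 5 * R * (p α) ^ 3 - R ^ 2 * (q α) ^ 2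
      - (5 / 2) * R ^ 2 * (p α) ^ 2| ≤ 18 * (R ^ 3 * x) := by
    rw [abs_le]
    constructor <;>
      linarith only [(abs_le.mp hAbsP4).1, (abs_le.mp hAbsP4).2,
        (abs_le.mp hAbsQ4).1, (abs_le.mp hAbsQ4).2,
        (abs_le.mp hAbsP2Q2).1, (abs_le.mp hAbsP2Q2).2,
        mul_le_mul_of_nonneg_left (abs_le.mp hAbsPQ2).1 (show (0:ℝ) ≤ R by positivity),
        mul_le_mul_of_nonneg_left (abs_le.mp hAbsPQ2).2 (show (0:ℝ) ≤ R by positivity),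
        mul_le_mul_of_nonneg_left (abs_le.mp hAbsP3).1 (show (0:ℝ) ≤ R by positivity),
        mul_le_mul_of_nonneg_left (abs_le.mp hAbsP3).2 (show (0:ℝ) ≤ R by positivity),
        mul_le_mul_of_nonneg_left (abs_le.mp hAbsQ2).1 (show (0:ℝ) ≤ R ^ 2 by positivity),
        mul_le_mul_of_nonneg_left (abs_le.mp hAbsQ2).2 (show (0:ℝ) ≤ R ^ 2 by positivity),
        mul_le_mul_of_nonneg_left (abs_le.mp hAbsP2).1 (show (0:ℝ) ≤ R ^ 2 by positivity),
        mul_le_mul_of_nonneg_left (abs_le.mp hAbsP2).2 (show (0:ℝ) ≤ R ^ 2 by positivity)]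
  have hBtb : |Bt - (3 / 2 - mr ^ 2) * R ^ 4| ≤ 41 * (1 + mr ^ 2) ^ 2 * (R ^ 3 * x) := by
    rw [hdiff]
    have h1 := abs_add_le ((3 / 2 : ℝ) * (p α) ^ 4 + 6 * R * (p α) ^ 3 + 9 * R ^ 2 * (p α) ^ 2
        + 6 * R ^ 3 * (p α)
        + mr ^ 2 * (6 * (p α) ^ 2 * (q α) ^ 2 + 3 * (p α) ^ 4 + 12 * R * ((p α) * (q α) ^ 2)
            + 8 * R * (p α) ^ 3 + 6 * R ^ 2 * (q α) ^ 2 + 6 * R ^ 2 * (p α) ^ 2))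
        (mr ^ 4 * (2 * (q α) ^ 4 - 2 * (p α) ^ 2 * (q α) ^ 2 - (5 / 2) * (p α) ^ 4
            - 3 * R * ((p α) * (q α) ^ 2) - 5 * R * (p α) ^ 3 - R ^ 2 * (q α) ^ 2
            - (5 / 2) * R ^ 2 * (p α) ^ 2))
    have h2 := abs_add_le ((3 / 2 : ℝ) * (p α) ^ 4 + 6 * R * (p α) ^ 3 + 9 * R ^ 2 * (p α) ^ 2
        + 6 * R ^ 3 * (p α))
        (mr ^ 2 * (6 * (p α) ^ 2 * (q α) ^ 2 + 3 * (p α) ^ 4 + 12 * R * ((p α) * (q α) ^ 2)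
            + 8 * R * (p α) ^ 3 + 6 * R ^ 2 * (q α) ^ 2 + 6 * R ^ 2 * (p α) ^ 2))
    rw [abs_mul, abs_of_nonneg (show (0:ℝ) ≤ mr ^ 2 by positivity)] at h2
    rw [abs_mul, abs_of_nonneg (show (0:ℝ) ≤ mr ^ 4 by positivity)] at h1
    have h3 := mul_le_mul_of_nonneg_left hG1 (show (0:ℝ) ≤ mr ^ 2 by positivity)
    have h4 := mul_le_mul_of_nonneg_left hG2 (show (0:ℝ) ≤ mr ^ 4 by positivity)
    have h5 : (0:ℝ) ≤ mr ^ 2 * (R ^ 3 * x) := by positivity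
    have h6 : (0:ℝ) ≤ mr ^ 4 * (R ^ 3 * x) := by positivity
    linarith only [hG0, h1, h2, h3, h4, h5, h6, hRx0]
  -- bounds on u
  have huLB : R / 2 ≤ u := by
    have hr0 : (0:ℝ) ≤ r α := le_trans (by linarith) (hrlb α)
    calc R / 2 ≤ r α := hrlb α
      _ = Real.sqrt ((r α) ^ 2) := (Real.sqrt_sq hr0).symm
      _ ≤ Real.sqrt (Qf α) := Real.sqrt_le_sqrt (by
          simp only [hQdef]; linarith only [sq_nonneg (mr * q α)])
      _ = u := hudef.symm
  have hmx2 : mr ^ 2 * x ^ 2 ≤ (R / 2) ^ 2 := by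
    have h := pow_le_pow_left₀ (mul_nonneg hm0 hx0) hmx 2
    calc mr ^ 2 * x ^ 2 = (|mr| * x) ^ 2 := by rw [mul_pow, sq_abs]
      _ ≤ (R / 2) ^ 2 := h
  have huUB : u ≤ 2 * R := by
    have h1 : Qf α ≤ (2 * R) ^ 2 := by
      rw [hQval]
      have h2 : mr ^ 2 * (q α) ^ 2 ≤ mr ^ 2 * x ^ 2 :=
        mul_le_mul_of_nonneg_left hsqQ (sq_nonneg mr)
      obtain ⟨hP1, hP2⟩ := abs_le.mp (hpb α)
      have hRP2 : (R + p α) ^ 2 ≤ (3 * R / 2) ^ 2 :=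
        pow_le_pow_left₀ (by linarith only [hP1, hxR2, hx0]) (by linarith only [hP2, hxR2]) 2
      have h2' : mr ^ 2 * (q α) ^ 2 ≤ (R / 2) ^ 2 := le_trans (by
        calc mr ^ 2 * (q α) ^ 2 ≤ mr ^ 2 * x ^ 2 := h2
          _ ≤ (R / 2) ^ 2 := hmx2) (le_refl _)
      linarith only [hRP2, h2', sq_nonneg R]
    calc u = Real.sqrt (Qf α) := hudef
      _ ≤ Real.sqrt ((2 * R) ^ 2) := Real.sqrt_le_sqrt h1
      _ = 2 * R := Real.sqrt_sq (by positivity)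
  have hu7lb : R ^ 7 / 128 ≤ u ^ 7 := by
    calc R ^ 7 / 128 = (R / 2) ^ 7 := by ring
      _ ≤ u ^ 7 := pow_le_pow_left₀ (by positivity) huLB 7
  have huR : |u - R| ≤ (3 + mr ^ 2) * x := by
    have h1 : |u - R| * (u + R) = |Qf α - R ^ 2| := by
      rw [← abs_of_pos (show (0:ℝ) < u + R by positivity), ← abs_mul]
      congr 1
      rw [← hu2]; ring
    have h2 : |Qf α - R ^ 2| ≤ (3 + mr ^ 2) * (R * x) := by
      rw [hQval, show (R + p α) ^ 2 + mr ^ 2 * (q α) ^ 2 - R ^ 2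
          = 2 * R * p α + (p α) ^ 2 + mr ^ 2 * (q α) ^ 2 from by ring, abs_le]
      obtain ⟨hP1, hP2⟩ := abs_le.mp (hpb α)
      have h2a : 2 * R * p α ≤ 2 * R * x :=
        mul_le_mul_of_nonneg_left hP2 (by positivity)
      have h2b : 2 * R * (-x) ≤ 2 * R * p α :=
        mul_le_mul_of_nonneg_left hP1 (by positivity)
      have h2c : (p α) ^ 2 ≤ R * x := hsqP.trans hx2R
      have h2d : mr ^ 2 * (q α) ^ 2 ≤ mr ^ 2 * (R * x) :=
        mul_le_mul_of_nonneg_left (hsqQ.trans hx2R) (sq_nonneg mr)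
      constructor
      · linarith only [h2b, sq_nonneg (p α), mul_nonneg (sq_nonneg mr) (sq_nonneg (q α)),
          mul_nonneg (sq_nonneg mr) (mul_nonneg hR.le hx0), mul_nonneg hR.le hx0]
      · linarith only [h2a, h2c, h2d, mul_nonneg hR.le hx0]
    have h3 : |u - R| * R ≤ (3 + mr ^ 2) * (R * x) := by
      calc |u - R| * R ≤ |u - R| * (u + R) :=
            mul_le_mul_of_nonneg_left (by linarith only [hu0]) (abs_nonneg _)
        _ = |Qf α - R ^ 2| := h1
        _ ≤ (3 + mr ^ 2) * (R * x) := h2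
    have h4 : |u - R| * R ≤ ((3 + mr ^ 2) * x) * R := by linarith only [h3]
    exact (mul_le_mul_iff_of_pos_right hR).mp h4
  have hSb : u ^ 6 + u ^ 5 * R + u ^ 4 * R ^ 2 + u ^ 3 * R ^ 3 + u ^ 2 * R ^ 4 + u * R ^ 5 + R ^ 6
      ≤ 448 * R ^ 6 := by
    have hu0le : (0:ℝ) ≤ u := hu0.le
    calc u ^ 6 + u ^ 5 * R + u ^ 4 * R ^ 2 + u ^ 3 * R ^ 3 + u ^ 2 * R ^ 4 + u * R ^ 5 + R ^ 6
        ≤ (2 * R) ^ 6 + (2 * R) ^ 5 * R + (2 * R) ^ 4 * R ^ 2 + (2 * R) ^ 3 * R ^ 3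
          + (2 * R) ^ 2 * R ^ 4 + (2 * R) * R ^ 5 + R ^ 6 := by
          gcongr <;> first | exact hu0le | exact huUB
      _ ≤ 448 * R ^ 6 := by
          have h6 : (0:ℝ) ≤ R ^ 6 := by positivity
          linarith only [h6]
  have hu7d : |u ^ 7 - R ^ 7| ≤ (3 + mr ^ 2) * x * (448 * R ^ 6) := by
    have hS0 : (0:ℝ) ≤ u ^ 6 + u ^ 5 * R + u ^ 4 * R ^ 2 + u ^ 3 * R ^ 3 + u ^ 2 * R ^ 4
        + u * R ^ 5 + R ^ 6 := by positivity
    rw [show u ^ 7 - R ^ 7 = (u - R) * (u ^ 6 + u ^ 5 * R + u ^ 4 * R ^ 2 + u ^ 3 * R ^ 3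
        + u ^ 2 * R ^ 4 + u * R ^ 5 + R ^ 6) from by ring, abs_mul, abs_of_nonneg hS0]
    exact mul_le_mul huR hSb hS0 (by positivity)
  have hcbar : |3 / 2 - mr ^ 2| ≤ mr ^ 2 + 3 / 2 := by
    rw [abs_le]; constructor <;> linarith only [sq_nonneg mr]
  have habs_sub : ∀ a b : ℝ, |a - b| ≤ |a| + |b| := fun a b => by
    rw [sub_eq_add_neg]
    exact (abs_add_le a (-b)).trans (by rw [abs_neg])
  have hnum : |Bt * R ^ 3 - (3 / 2 - mr ^ 2) * u ^ 7|
      ≤ (41 * (1 + mr ^ 2) ^ 2 + 448 * (mr ^ 2 + 3 / 2) * (3 + mr ^ 2)) * R ^ 6 * x := by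
    have e : Bt * R ^ 3 - (3 / 2 - mr ^ 2) * u ^ 7
        = R ^ 3 * (Bt - (3 / 2 - mr ^ 2) * R ^ 4) - (3 / 2 - mr ^ 2) * (u ^ 7 - R ^ 7) := by ring
    rw [e]
    have t1 : |R ^ 3 * (Bt - (3 / 2 - mr ^ 2) * R ^ 4)|
        ≤ R ^ 3 * (41 * (1 + mr ^ 2) ^ 2 * (R ^ 3 * x)) := by
      rw [abs_mul, abs_of_nonneg (show (0:ℝ) ≤ R ^ 3 by positivity)]
      exact mul_le_mul_of_nonneg_left hBtb (by positivity)
    have t2 : |(3 / 2 - mr ^ 2) * (u ^ 7 - R ^ 7)|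
        ≤ (mr ^ 2 + 3 / 2) * ((3 + mr ^ 2) * x * (448 * R ^ 6)) := by
      rw [abs_mul]
      exact mul_le_mul hcbar hu7d (abs_nonneg _) (by positivity)
    calc |R ^ 3 * (Bt - (3 / 2 - mr ^ 2) * R ^ 4) - (3 / 2 - mr ^ 2) * (u ^ 7 - R ^ 7)|
        ≤ |R ^ 3 * (Bt - (3 / 2 - mr ^ 2) * R ^ 4)| + |(3 / 2 - mr ^ 2) * (u ^ 7 - R ^ 7)| :=
          habs_sub _ _
      _ ≤ R ^ 3 * (41 * (1 + mr ^ 2) ^ 2 * (R ^ 3 * x))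
          + (mr ^ 2 + 3 / 2) * ((3 + mr ^ 2) * x * (448 * R ^ 6)) := by linarith only [t1, t2]
      _ = (41 * (1 + mr ^ 2) ^ 2 + 448 * (mr ^ 2 + 3 / 2) * (3 + mr ^ 2)) * R ^ 6 * x := by ring
  -- final assembly
  have hlin : (mr ^ 3 - 3 / 2 * mr) / R ^ 3 * (δI * Real.cos (mr * α) + δR * Real.sin (mr * α))
      = mr * (3 / 2 - mr ^ 2) * q α / R ^ 3 := by
    simp only [hqdef]
    field_simp
    ring
  rw [hproj, hlin]
  have heq2 : mr * q α * Bt / u ^ 7 - mr * (3 / 2 - mr ^ 2) * q α / R ^ 3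
      = mr * q α * (Bt * R ^ 3 - (3 / 2 - mr ^ 2) * u ^ 7) / (R ^ 3 * u ^ 7) := by
    field_simp
  rw [heq2, abs_div, abs_mul, abs_mul,
    abs_of_pos (show (0:ℝ) < R ^ 3 * u ^ 7 by positivity)]
  calc |mr| * |q α| * |Bt * R ^ 3 - (3 / 2 - mr ^ 2) * u ^ 7| / (R ^ 3 * u ^ 7)
      ≤ (1 + |mr|) * x * ((41 * (1 + mr ^ 2) ^ 2 + 448 * (mr ^ 2 + 3 / 2) * (3 + mr ^ 2))
          * R ^ 6 * x) / (R ^ 3 * (R ^ 7 / 128)) := by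
        gcongr <;>
          first
            | exact hqb α
            | exact hnum
            | exact hu7lb
            | positivity
            | linarith only []
    _ = (128 * (1 + |mr|) * (41 * (1 + mr ^ 2) ^ 2 + 448 * (mr ^ 2 + 3 / 2) * (3 + mr ^ 2))
          / R ^ 4) * (δR ^ 2 + δI ^ 2) := by
        rw [← hx2]
        field_simp

/-- For `r(α) = R + δ_R cos(mα) − δ_I sin(mα)`, as `(δ_R,δ_I) → 0`
the radial projection of the Airy velocity satisfies, uniformly in `α ∈ [0,2π]`,
`W·(cos α, sin α) = δ_I τ* cos(mα) + δ_R τ* sin(mα) + O(δ_R² + δ_I²)` with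
`τ* = (m³ − (3/2)m)/R³`. -/
theorem perturbed_circle_airy_velocity_expansion (R : ℝ) (hR : 0 < R) (m : ℤ) :
    ∃ C ε : ℝ, 0 < C ∧ 0 < ε ∧
      ∀ δR δI : ℝ, δR ^ 2 + δI ^ 2 < ε ^ 2 → ∀ α ∈ Set.Icc (0 : ℝ) (2 * π),
        |airyRadialProj
            (fun a => R + δR * Real.cos (m * a) - δI * Real.sin (m * a)) α
          - ((m : ℝ) ^ 3 - (3 / 2) * (m : ℝ)) / R ^ 3
              * (δI * Real.cos (m * α) + δR * Real.sin (m * α))|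
        ≤ C * (δR ^ 2 + δI ^ 2) := by
  refine ⟨128 * (1 + |(m : ℝ)|) * (41 * (1 + (m : ℝ) ^ 2) ^ 2
      + 448 * ((m : ℝ) ^ 2 + 3 / 2) * (3 + (m : ℝ) ^ 2)) / R ^ 4,
    R / (2 * (1 + |(m : ℝ)|)), by positivity, by positivity, ?_⟩
  intro δR δI hδ α _
  exact aux_expansion R hR (m : ℝ) δR δI hδ α
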